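/- If p and q are both t-piecewise degree-d probability distributions on [n], and k = 2t(d+1) satisfies 2 ≤ k ≤ n, then ‖p − q‖_{A_k} = ‖p − q‖_1. -/

import Mathlib

open Finset ProbabilityTheory MeasureTheory

/-- The probability mass that a function on `Fin n` assigns to the (0-indexed)
interval `[a, b)`. -/
noncomputable def intervalMass {n : ℕ} (q : Fin n → ℝ) (a b : ℕ) : ℝ :=
  ∑ j ∈ Finset.univ.filter (fun j : Fin n => a ≤ (j : ℕ) ∧ (j : ℕ) < b), q j

/-- `q` is a probability distribution on `[n]` (identified with `Fin n`). -/
noncomputable def IsDist {n : ℕ} (q : Fin n → ℝ) : Prop := (∀ i, 0 ≤ q i) ∧ ∑ i, q i = 1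

/-- The `A_k` distance between `p` and `q` on `Fin n`: the supremum, over all partitions of
`Fin n` into `k` consecutive intervals (described by their monotone sequence of boundary
points), of the sum of the discrepancies `|p(I) - q(I)|` over the intervals. -/
noncomputable def AkDist (n k : ℕ) (p q : Fin n → ℝ) : ℝ :=
  sSup { x : ℝ | ∃ b : Fin (k + 1) → ℕ, Monotone b ∧ b 0 = 0 ∧ b (Fin.last k) = n ∧
    x = ∑ i : Fin k,
      |intervalMass p (b i.castSucc) (b i.succ) - intervalMass q (b i.castSucc) (b i.succ)| }

/-- The `L1` distance between two functions on `Fin n`. -/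
noncomputable def L1Dist {n : ℕ} (p q : Fin n → ℝ) : ℝ := ∑ i, |p i - q i|

/-- The `L2` distance between two functions on `Fin n`. -/
noncomputable def L2Dist {n : ℕ} (p q : Fin n → ℝ) : ℝ := Real.sqrt (∑ i, (p i - q i) ^ 2)

/-- The uniform distribution on `Fin n`. -/
noncomputable def unif (n : ℕ) : Fin n → ℝ := fun _ => 1 / n

/-- The probability that the `m`-fold product measure `q^{⊗m}` assigns to a set
`A ⊆ [n]^m` of sample sequences. -/
noncomputable def prodProb {n m : ℕ} (q : Fin n → ℝ) (A : Finset (Fin m → Fin n)) : ℝ :=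
  ∑ x ∈ A, ∏ j, q (x j)

/-- The reduced distribution of `q` w.r.t. the partition of `Fin n` into `ℓ` consecutive
intervals of equal length `n / ℓ` (assuming `ℓ ∣ n`). -/
noncomputable def reducedDist {n : ℕ} (q : Fin n → ℝ) (ℓ : ℕ) : Fin ℓ → ℝ :=
  fun i => intervalMass q ((i : ℕ) * (n / ℓ)) (((i : ℕ) + 1) * (n / ℓ))

/-- `p` is a `t`-piecewise degree-`d` function on `Fin n`: there is a partition of `Fin n`
into `t` consecutive intervals on each of which `p` agrees with a real polynomial of degree
at most `d`. -/
noncomputable def IsPiecewisePoly {n : ℕ} (t d : ℕ) (p : Fin n → ℝ) : Prop :=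
  ∃ b : Fin (t + 1) → ℕ, Monotone b ∧ b 0 = 0 ∧ b (Fin.last t) = n ∧
    ∀ i : Fin t, ∃ P : Polynomial ℝ, P.degree ≤ (d : ℕ) ∧
      ∀ x : Fin n, b i.castSucc ≤ (x : ℕ) → (x : ℕ) < b i.succ → p x = P.eval ((x : ℕ) : ℝ)

/-- `q` is `k`-flat: there is a partition of `Fin n` into `k` consecutive intervals
on each of which `q` is constant. -/
noncomputable def IsKFlat {n : ℕ} (k : ℕ) (q : Fin n → ℝ) : Prop :=
  ∃ b : Fin (k + 1) → ℕ, Monotone b ∧ b 0 = 0 ∧ b (Fin.last k) = n ∧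
    ∀ i : Fin k, ∃ c : ℝ, ∀ x : Fin n, b i.castSucc ≤ (x : ℕ) → (x : ℕ) < b i.succ → q x = c

/-- The term `Discr(I)² / width(I)^{1/8}` for the interval `I = [a, b)` in `Fin n`, where
the discrepancy is `Discr(I) = |q(I) - U_n(I)|` and the width is `|I|/n` (relative to the
uniform distribution `U_n`). -/
noncomputable def ssTerm {n : ℕ} (q : Fin n → ℝ) (a b : ℕ) : ℝ :=
  |intervalMass q a b - ((b - a : ℕ) : ℝ) / n| ^ 2 / (((b - a : ℕ) : ℝ) / n) ^ ((1 : ℝ) / 8)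

/-- The squared scale-sensitive-`L2` distance between `q` and the uniform distribution
on `Fin n`, at scale `1/k`: the supremum, over all partitions of `Fin n` into consecutive
nonempty intervals each of width at most `1/k`, of `∑ Discr(I)² / width(I)^{1/8}`. -/
noncomputable def ssDistSq (n k : ℕ) (q : Fin n → ℝ) : ℝ :=
  sSup { x : ℝ | ∃ r : ℕ, ∃ b : Fin (r + 1) → ℕ, StrictMono b ∧ b 0 = 0 ∧ b (Fin.last r) = n ∧
    (∀ i : Fin r, ((b i.succ - b i.castSucc : ℕ) : ℝ) / n ≤ 1 / k) ∧
    x = ∑ i : Fin r, ssTerm q (b i.castSucc) (b i.succ) }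

namespace AkAux

lemma piece_exists {m n : ℕ} (b : Fin (m+1) → ℕ) (hb : Monotone b) (h0 : b 0 = 0)
    (hl : b (Fin.last m) = n) {x : ℕ} (hx : x < n) :
    ∃ i : Fin m, b i.castSucc ≤ x ∧ x < b i.succ := by
  classical
  set s : Finset (Fin (m+1)) := Finset.univ.filter (fun i => b i ≤ x) with hs
  have h0s : (0 : Fin (m+1)) ∈ s := by simp [hs, h0]
  have hne : s.Nonempty := ⟨0, h0s⟩
  set i := s.max' hne with hi
  have his : i ∈ s := s.max'_mem hne
  have hbi : b i ≤ x := by simpa [hs] using his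
  have hilt : (i : ℕ) < m := by
    by_contra h
    have him : (i : ℕ) = m := le_antisymm (Nat.lt_succ_iff.mp i.isLt) (le_of_not_gt h)
    have : i = Fin.last m := Fin.ext him
    rw [this, hl] at hbi
    omega
  refine ⟨⟨i, hilt⟩, ?_, ?_⟩
  · have : (Fin.castSucc ⟨(i : ℕ), hilt⟩) = i := Fin.ext rfl
    rw [this]; exact hbi
  · by_contra h
    have hmem : (Fin.succ ⟨(i : ℕ), hilt⟩) ∈ s := by
      simp only [hs, Finset.mem_filter, Finset.mem_univ, true_and]
      omega
    have := s.le_max' _ hmem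
    rw [← hi] at this
    have h2 : ((Fin.succ ⟨(i : ℕ), hilt⟩ : Fin (m+1)) : ℕ) ≤ (i : ℕ) := this
    simp [Fin.val_succ] at h2

lemma sum_ivl_partition {n : ℕ} (k : ℕ) (b : Fin (k+1) → ℕ) (hb : Monotone b) (h0 : b 0 = 0)
    (hl : b (Fin.last k) = n) (h : Fin n → ℝ) :
    ∑ i : Fin k, ∑ j ∈ Finset.univ.filter
        (fun j : Fin n => b i.castSucc ≤ (j:ℕ) ∧ (j:ℕ) < b i.succ), h j
      = ∑ j, h j := by
  classical
  have hdis : ((Finset.univ : Finset (Fin k)) : Set (Fin k)).PairwiseDisjoint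
      (fun i : Fin k => Finset.univ.filter
        (fun j : Fin n => b i.castSucc ≤ (j:ℕ) ∧ (j:ℕ) < b i.succ)) := by
    intro i _ i' _ hne
    have key : ∀ a a' : Fin k, a < a' → Disjoint
        (Finset.univ.filter (fun j : Fin n => b a.castSucc ≤ (j:ℕ) ∧ (j:ℕ) < b a.succ))
        (Finset.univ.filter (fun j : Fin n => b a'.castSucc ≤ (j:ℕ) ∧ (j:ℕ) < b a'.succ)) := by
      intro a a' haa
      rw [Finset.disjoint_left]
      intro j hj hj'
      simp only [Finset.mem_filter, Finset.mem_univ, true_and] at hj hj'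
      have : b a.succ ≤ b a'.castSucc := hb (by
        rw [Fin.le_def]
        simp only [Fin.val_succ, Fin.coe_castSucc]
        exact haa)
      omega
    rcases lt_or_gt_of_ne hne with h | h
    · exact key _ _ h
    · exact (key _ _ h).symm
  rw [← Finset.sum_biUnion hdis]
  apply Finset.sum_congr _ (fun _ _ => rfl)
  apply Finset.eq_univ_of_forall
  intro j
  rw [Finset.mem_biUnion]
  obtain ⟨i, h1, h2⟩ := piece_exists b hb h0 hl j.isLt
  exact ⟨i, Finset.mem_univ _, by simp [h1, h2]⟩

lemma abs_sum_eq {α : Type*} (s : Finset α) (f : α → ℝ)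
    (h : (∀ j ∈ s, 0 ≤ f j) ∨ (∀ j ∈ s, f j ≤ 0)) :
    |∑ j ∈ s, f j| = ∑ j ∈ s, |f j| := by
  rcases h with h | h
  · rw [abs_of_nonneg (Finset.sum_nonneg h)]
    exact Finset.sum_congr rfl fun j hj => (abs_of_nonneg (h j hj)).symm
  · rw [abs_of_nonpos (Finset.sum_nonpos h), ← Finset.sum_neg_distrib]
    exact Finset.sum_congr rfl fun j hj => (abs_of_nonpos (h j hj)).symm

lemma exists_root (R : Polynomial ℝ) {u v : ℝ} (huv : u < v)
    (h : R.eval u * R.eval v < 0) :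
    ∃ r, u < r ∧ r < v ∧ R.eval r = 0 := by
  have hcont : ContinuousOn (fun x => R.eval x) (Set.Icc u v) :=
    (R.continuous_aeval).continuousOn
  rcases mul_neg_iff.mp h with ⟨h1, h2⟩ | ⟨h1, h2⟩
  · have := intermediate_value_Ioo' (le_of_lt huv) hcont
    have h0 : (0:ℝ) ∈ Set.Ioo (R.eval v) (R.eval u) := ⟨h2, h1⟩
    obtain ⟨r, hr, hr0⟩ := this h0
    exact ⟨r, hr.1, hr.2, hr0⟩
  · have := intermediate_value_Ioo (le_of_lt huv) hcont
    have h0 : (0:ℝ) ∈ Set.Ioo (R.eval u) (R.eval v) := ⟨h1, h2⟩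
    obtain ⟨r, hr, hr0⟩ := this h0
    exact ⟨r, hr.1, hr.2, hr0⟩

end AkAux

set_option maxHeartbeats 1000000 in
/-- For `t`-piecewise degree-`d` distributions `p, q` on `[n]`, the `A_k` distance with
`k = 2t(d+1)` equals the `L1` distance. -/
theorem Ak_eq_L1_piecewise_poly (n t d : ℕ) (p q : Fin n → ℝ)
    (hp : IsDist p) (hq : IsDist q)
    (hpp : IsPiecewisePoly t d p) (hqq : IsPiecewisePoly t d q)
    (hk2 : 2 ≤ 2 * t * (d + 1)) (hkn : 2 * t * (d + 1) ≤ n) :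
    AkDist n (2 * t * (d + 1)) p q = L1Dist p q := by
  classical
  set k := 2 * t * (d + 1) with hk
  have hn2 : 2 ≤ n := le_trans hk2 hkn
  obtain ⟨bp, hbpm, hbp0, hbpl, hbpP⟩ := hpp
  obtain ⟨bq, hbqm, hbq0, hbql, hbqP⟩ := hqq
  set D : Fin n → ℝ := fun j => p j - q j with hD
  set g : ℕ → ℝ := fun x => if h : x < n then D ⟨x, h⟩ else 0 with hg
  have hgD : ∀ j : Fin n, g (j : ℕ) = D j := by
    intro j; simp only [hg, j.isLt, dif_pos, Fin.eta]
  set F0 : Finset ℕ := (Finset.univ.image bp) ∪ (Finset.univ.image bq) with hF0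
  have hbp_le : ∀ i, bp i ≤ n := fun i => hbpl ▸ hbpm (Fin.le_last i)
  have hbq_le : ∀ i, bq i ≤ n := fun i => hbql ▸ hbqm (Fin.le_last i)
  have hF0le : ∀ f ∈ F0, f ≤ n := by
    intro f hf
    rcases Finset.mem_union.mp hf with h | h <;>
      · obtain ⟨i, _, rfl⟩ := Finset.mem_image.mp h
        first | exact hbp_le i | exact hbq_le i
  have h0F0 : 0 ∈ F0 := Finset.mem_union_left _
    (Finset.mem_image.mpr ⟨0, Finset.mem_univ _, hbp0⟩)
  have hnF0 : n ∈ F0 := Finset.mem_union_left _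
    (Finset.mem_image.mpr ⟨Fin.last t, Finset.mem_univ _, hbpl⟩)
  set C : Finset ℕ := (Finset.range n).filter (fun x => ∃ y, y < x ∧ g y * g x < 0 ∧
      (∀ z, y < z → z < x → g z = 0) ∧ (∀ f ∈ F0, ¬(y < f ∧ f ≤ x))) with hC
  have hCmem : ∀ x ∈ C, x < n ∧ ∃ y, y < x ∧ g y * g x < 0 ∧
      (∀ z, y < z → z < x → g z = 0) ∧ (∀ f ∈ F0, ¬(y < f ∧ f ≤ x)) := by
    intro x hx
    rw [hC, Finset.mem_filter, Finset.mem_range] at hx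
    exact hx
  have hgC : ∀ x ∈ C, g x ≠ 0 := by
    intro x hx hgx
    obtain ⟨_, y, _, hsgn, _, _⟩ := hCmem x hx
    rw [hgx, mul_zero] at hsgn
    exact lt_irrefl 0 hsgn
  set B : Finset ℕ := F0 ∪ C with hB
  have h0B : 0 ∈ B := Finset.mem_union_left _ h0F0
  have hnB : n ∈ B := Finset.mem_union_left _ hnF0
  have hBle : ∀ c ∈ B, c ≤ n := by
    intro c hc
    rcases Finset.mem_union.mp hc with h | h
    · exact hF0le c h
    · exact le_of_lt (hCmem c h).1
  -- cardinality of F0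
  have hcardF0 : F0.card ≤ 2 * t := by
    have hnq : n ∈ (Finset.univ.image bq).erase 0 := by
      refine Finset.mem_erase.mpr ⟨by omega, ?_⟩
      exact Finset.mem_image.mpr ⟨Fin.last t, Finset.mem_univ _, hbql⟩
    have hsub : F0 ⊆ (Finset.univ.image bp) ∪ (((Finset.univ.image bq).erase 0).erase n) := by
      intro f hf
      rcases Finset.mem_union.mp hf with h | h
      · exact Finset.mem_union_left _ h
      · by_cases hf0 : f = 0
        · exact Finset.mem_union_left _ (hf0 ▸
            Finset.mem_image.mpr ⟨0, Finset.mem_univ _, hbp0⟩)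
        · by_cases hfn : f = n
          · exact Finset.mem_union_left _ (hfn ▸
              Finset.mem_image.mpr ⟨Fin.last t, Finset.mem_univ _, hbpl⟩)
          · exact Finset.mem_union_right _ (Finset.mem_erase.mpr ⟨hfn,
              Finset.mem_erase.mpr ⟨hf0, h⟩⟩)
    have h1 : (Finset.univ.image bp).card ≤ t + 1 :=
      le_trans (Finset.card_image_le) (by simp)
    have h2 : (((Finset.univ.image bq).erase 0).erase n).card ≤ t - 1 := by
      rw [Finset.card_erase_of_mem hnq, Finset.card_erase_of_mem]
      · have : (Finset.univ.image bq).card ≤ t + 1 :=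
          le_trans (Finset.card_image_le) (by simp)
        omega
      · exact Finset.mem_image.mpr ⟨0, Finset.mem_univ _, hbq0⟩
    have ht1 : 1 ≤ t := by
      rcases Nat.eq_zero_or_pos t with h | h
      · rw [h] at hk; simp at hk; omega
      · exact h
    calc F0.card ≤ _ := Finset.card_le_card hsub
      _ ≤ _ := Finset.card_union_le _ _
      _ ≤ 2 * t := by omega
  -- the fiber map
  have h0filter : ∀ x : ℕ, 0 ∈ F0.filter (fun u => u ≤ x) :=
    fun x => Finset.mem_filter.mpr ⟨h0F0, Nat.zero_le x⟩
  set aOf : ℕ → ℕ := fun x => (F0.filter (fun u => u ≤ x)).max' ⟨0, h0filter x⟩ with haOf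
  have haOf_mem : ∀ x : ℕ, aOf x ∈ F0 ∧ aOf x ≤ x := by
    intro x
    have := Finset.max'_mem (F0.filter (fun u => u ≤ x)) ⟨0, h0filter x⟩
    rw [Finset.mem_filter] at this
    exact this
  have haOf_max : ∀ x f, f ∈ F0 → f ≤ x → f ≤ aOf x := by
    intro x f hf hfx
    exact Finset.le_max' (F0.filter (fun u => u ≤ x)) f (Finset.mem_filter.mpr ⟨hf, hfx⟩)
  -- each fiber has at most d elements
  have hfiber : ∀ a ∈ F0, (C.filter (fun x => aOf x = a)).card ≤ d := by
    intro a ha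
    set fib := C.filter (fun x => aOf x = a) with hfib
    rcases Finset.eq_empty_or_nonempty fib with he | ⟨x0, hx0⟩
    · simp [he]
    obtain ⟨hx0C, hx0a⟩ := Finset.mem_filter.mp hx0
    have han : a < n := lt_of_le_of_lt (hx0a ▸ (haOf_mem x0).2) (hCmem x0 hx0C).1
    obtain ⟨jp, hjp1, hjp2⟩ := AkAux.piece_exists bp hbpm hbp0 hbpl han
    obtain ⟨P, hPdeg, hPval⟩ := hbpP jp
    obtain ⟨jq, hjq1, hjq2⟩ := AkAux.piece_exists bq hbqm hbq0 hbql han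
    obtain ⟨Q, hQdeg, hQval⟩ := hbqP jq
    set R := P - Q with hR
    have hRdeg : R.natDegree ≤ d :=
      Polynomial.natDegree_le_iff_degree_le.mpr
        (le_trans (Polynomial.degree_sub_le P Q) (max_le hPdeg hQdeg))
    have hRg : ∀ z : ℕ, a ≤ z → z < n → (∀ f ∈ F0, ¬(a < f ∧ f ≤ z)) →
        g z = R.eval (z : ℝ) := by
      intro z hza hzn hnoF
      have hzp : z < bp jp.succ := by
        by_contra h
        exact hnoF (bp jp.succ)
          (Finset.mem_union_left _ (Finset.mem_image.mpr ⟨jp.succ, Finset.mem_univ _, rfl⟩))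
          ⟨hjp2, by omega⟩
      have hzq : z < bq jq.succ := by
        by_contra h
        exact hnoF (bq jq.succ)
          (Finset.mem_union_right _ (Finset.mem_image.mpr ⟨jq.succ, Finset.mem_univ _, rfl⟩))
          ⟨hjq2, by omega⟩
      have hpz : p ⟨z, hzn⟩ = P.eval (z : ℝ) := hPval ⟨z, hzn⟩ (le_trans hjp1 hza) hzp
      have hqz : q ⟨z, hzn⟩ = Q.eval (z : ℝ) := hQval ⟨z, hzn⟩ (le_trans hjq1 hza) hzq
      simp only [hg, dif_pos hzn, hD, hR, Polynomial.eval_sub, hpz, hqz]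
    have hfibfacts : ∀ x ∈ fib, ∃ r : ℝ, r ∈ R.roots.toFinset ∧ r < (x:ℝ) ∧
        ∀ x' : ℕ, x' < x → g x' ≠ 0 → (x':ℝ) < r := by
      intro x hx
      obtain ⟨hxC, hxa⟩ := Finset.mem_filter.mp hx
      obtain ⟨hxn, y, hyx, hsgn, hzero, hnoF⟩ := hCmem x hxC
      have hax : a ≤ x := hxa ▸ (haOf_mem x).2
      have hnoFax : ∀ f ∈ F0, ¬(a < f ∧ f ≤ x) := by
        rintro f hf ⟨h1, h2⟩
        have := haOf_max x f hf h2
        omega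
      have hay : a ≤ y := by
        by_contra h
        push_neg at h
        exact hnoF a ha ⟨h, hax⟩
      have hgy : g y = R.eval (y:ℝ) := hRg y hay (lt_trans hyx hxn)
        (by rintro f hf ⟨h1, h2⟩; exact hnoFax f hf ⟨h1, le_trans h2 (le_of_lt hyx)⟩)
      have hgx : g x = R.eval (x:ℝ) := hRg x hax hxn hnoFax
      have hRsgn : R.eval (y:ℝ) * R.eval (x:ℝ) < 0 := by rw [← hgy, ← hgx]; exact hsgn
      obtain ⟨r, hr1, hr2, hr0⟩ := AkAux.exists_root R (by exact_mod_cast hyx) hRsgn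
      have hgxne : g x ≠ 0 := hgC x hxC
      have hRne : R ≠ 0 := fun h => hgxne (by rw [hgx, h, Polynomial.eval_zero])
      refine ⟨r, ?_, hr2, ?_⟩
      · rw [Multiset.mem_toFinset, Polynomial.mem_roots hRne]
        exact hr0
      · intro x' hx' hgx'
        have hx'y : x' ≤ y := by
          by_contra h
          push_neg at h
          exact hgx' (hzero x' h hx')
        calc (x':ℝ) ≤ (y:ℝ) := by exact_mod_cast hx'y
          _ < r := hr1
    set F : ℕ → ℝ := fun x => if hx : x ∈ fib then (hfibfacts x hx).choose else 0 with hF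
    have hkey : ∀ u v, u ∈ fib → v ∈ fib → u < v → F u < F v := by
      intro u v hu hv huv
      simp only [hF, dif_pos hu, dif_pos hv]
      have hru := (hfibfacts u hu).choose_spec
      have hrv := (hfibfacts v hv).choose_spec
      have hgu : g u ≠ 0 := hgC u (Finset.mem_filter.mp hu).1
      calc (hfibfacts u hu).choose < (u:ℝ) := hru.2.1
        _ < (hfibfacts v hv).choose := hrv.2.2 u huv hgu
    have hinj : Set.InjOn F fib := by
      intro x1 h1 x2 h2 hf
      by_contra hne
      rcases lt_or_gt_of_ne hne with h | h
      · exact absurd hf (ne_of_lt (hkey _ _ h1 h2 h))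
      · exact absurd hf.symm (ne_of_lt (hkey _ _ h2 h1 h))
    have hmaps : ∀ x ∈ fib, F x ∈ R.roots.toFinset := by
      intro x hx
      simp only [hF, dif_pos hx]
      exact (hfibfacts x hx).choose_spec.1
    calc fib.card ≤ R.roots.toFinset.card := Finset.card_le_card_of_injOn F hmaps hinj
      _ ≤ Multiset.card R.roots := Multiset.toFinset_card_le _
      _ ≤ R.natDegree := Polynomial.card_roots' R
      _ ≤ d := hRdeg
  have hcardC : C.card ≤ 2 * t * d := by
    rw [Finset.card_eq_sum_card_fiberwise (fun x hx => (haOf_mem x).1 : ∀ x ∈ C, aOf x ∈ F0)]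
    calc ∑ a ∈ F0, (C.filter (fun x => aOf x = a)).card ≤ ∑ _a ∈ F0, d :=
          Finset.sum_le_sum hfiber
      _ = F0.card * d := by rw [Finset.sum_const, smul_eq_mul]
      _ ≤ 2 * t * d := Nat.mul_le_mul_right d hcardF0
  have hcardB : B.card ≤ k := by
    calc B.card ≤ F0.card + C.card := Finset.card_union_le _ _
      _ ≤ 2 * t + 2 * t * d := by omega
      _ = k := by rw [hk]; ring
  -- the sorted list of boundary points
  set l := B.sort (· ≤ ·) with hldef
  have hlen : l.length = B.card := Finset.length_sort _
  have hlsorted : l.Pairwise (· ≤ ·) := Finset.pairwise_sort _ _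
  have hlmem : ∀ (m : Fin l.length), l.get m ∈ B :=
    fun m => (Finset.mem_sort _).mp (List.get_mem l m)
  set b : Fin (k+1) → ℕ := fun i => if h : (i:ℕ) < l.length then l.get ⟨i, h⟩ else n with hbdef
  have hbmono : Monotone b := by
    intro i j hij
    have hijn : (i:ℕ) ≤ (j:ℕ) := hij
    by_cases hi : (i:ℕ) < l.length
    · by_cases hj : (j:ℕ) < l.length
      · simp only [hbdef, dif_pos hi, dif_pos hj]
        exact hlsorted.rel_get_of_le hijn
      · simp only [hbdef, dif_pos hi, dif_neg hj]
        exact hBle _ (hlmem _)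
    · have hj : ¬ (j:ℕ) < l.length := fun h => hi (lt_of_le_of_lt hijn h)
      simp only [hbdef, dif_neg hi, dif_neg hj, le_refl]
  have hb0 : b 0 = 0 := by
    have h0l : 0 < l.length := by
      rw [hlen]; exact Finset.card_pos.mpr ⟨0, h0B⟩
    have hmin : l.get ⟨0, h0l⟩ = B.min' ⟨0, h0B⟩ := by
      exact Finset.sorted_zero_eq_min'_aux _ _ _
    have hminval : B.min' ⟨0, h0B⟩ = 0 :=
      le_antisymm (Finset.min'_le _ _ h0B) (Nat.zero_le _)
    simp only [hbdef, dif_pos (show ((0 : Fin (k+1)) : ℕ) < l.length from h0l)]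
    exact hmin.trans hminval
  have hblast : b (Fin.last k) = n := by
    have : ¬ ((Fin.last k : Fin (k+1)) : ℕ) < l.length := by
      rw [Fin.val_last, hlen]; omega
    simp only [hbdef, dif_neg this]
  have hgap : ∀ (i : Fin k), ∀ c ∈ B, b i.castSucc < c → b i.succ ≤ c := by
    intro i c hc hlt
    have hcl : c ∈ l := by rw [hldef, Finset.mem_sort]; exact hc
    obtain ⟨m, hm⟩ := List.mem_iff_get.mp hcl
    have hcle : c ≤ n := hBle c hc
    have hcs : ((i.castSucc : Fin (k+1)) : ℕ) = (i:ℕ) := rfl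
    have hi : (i:ℕ) < l.length := by
      by_contra h
      rw [hbdef] at hlt
      simp only [hcs, dif_neg h] at hlt
      omega
    have hbival : b i.castSucc = l.get ⟨i, hi⟩ := by
      rw [hbdef]; simp only [hcs, dif_pos hi]
    have him : (i:ℕ) < (m:ℕ) := by
      by_contra h
      push_neg at h
      have := hlsorted.rel_get_of_le (show (m:ℕ) ≤ ((⟨(i:ℕ), hi⟩ : Fin l.length):ℕ) from h)
      rw [hm] at this
      rw [hbival] at hlt
      omega
    have hi1 : (i:ℕ)+1 < l.length := lt_of_le_of_lt him m.isLt
    have hsval : ((i.succ : Fin (k+1)) : ℕ) = (i:ℕ)+1 := rfl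
    have : b i.succ = l.get ⟨(i:ℕ)+1, hi1⟩ := by
      rw [hbdef]; simp only [hsval, dif_pos hi1]
    rw [this, ← hm]
    exact hlsorted.rel_get_of_le (show ((⟨(i:ℕ)+1, hi1⟩ : Fin l.length):ℕ) ≤ (m:ℕ) from him)
  -- no mixed signs within a gap of B
  have hnomix : ∀ v : ℕ, v < n → ∀ u : ℕ, u < v →
      (∀ c ∈ B, ¬(u < c ∧ c ≤ v)) → ¬ (g u * g v < 0) := by
    intro v
    induction v using Nat.strong_induction_on with
    | _ v IH =>
      intro hvn u huv hnoB hneg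
      have hgu : g u ≠ 0 := by
        intro h; rw [h, zero_mul] at hneg; exact lt_irrefl 0 hneg
      have hgv : g v ≠ 0 := by
        intro h; rw [h, mul_zero] at hneg; exact lt_irrefl 0 hneg
      set s : Finset ℕ := (Finset.Ico u v).filter (fun z => g z ≠ 0) with hs
      have hus : u ∈ s := Finset.mem_filter.mpr ⟨Finset.mem_Ico.mpr ⟨le_refl u, huv⟩, hgu⟩
      set y := s.max' ⟨u, hus⟩ with hy
      have hys : y ∈ s := Finset.max'_mem _ _
      obtain ⟨hyIco, hgy⟩ := Finset.mem_filter.mp hys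
      obtain ⟨huy, hyv⟩ := Finset.mem_Ico.mp hyIco
      have hymax : ∀ z ∈ s, z ≤ y := fun z hz => Finset.le_max' _ _ hz
      by_cases hcase : g y * g v < 0
      · have hvC : v ∈ C := by
          rw [hC, Finset.mem_filter, Finset.mem_range]
          refine ⟨hvn, y, hyv, hcase, ?_, ?_⟩
          · intro z hz1 hz2
            by_contra hgz
            have : z ∈ s := Finset.mem_filter.mpr
              ⟨Finset.mem_Ico.mpr ⟨le_trans huy (le_of_lt hz1), hz2⟩, hgz⟩
            have := hymax z this
            omega
          · rintro f hf ⟨h1, h2⟩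
            exact hnoB f (Finset.mem_union_left _ hf) ⟨lt_of_le_of_lt huy h1, h2⟩
        exact hnoB v (Finset.mem_union_right _ hvC) ⟨huv, le_refl v⟩
      · have hyvpos : 0 < g y * g v :=
          lt_of_le_of_ne (not_lt.mp hcase) (Ne.symm (mul_ne_zero hgy hgv))
        have huyneg : g u * g y < 0 := by
          rcases mul_neg_iff.mp hneg with ⟨hu1, hv1⟩ | ⟨hu1, hv1⟩ <;>
            rcases mul_pos_iff.mp hyvpos with ⟨hy1, hv2⟩ | ⟨hy1, hv2⟩
          · linarith
          · exact mul_neg_of_pos_of_neg hu1 hy1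
          · exact mul_neg_of_neg_of_pos hu1 hy1
          · linarith
        have huy' : u < y := by
          rcases lt_or_eq_of_le huy with h | h
          · exact h
          · exfalso; rw [h] at huyneg; nlinarith
        exact IH y hyv (lt_trans hyv hvn) u huy'
          (fun c hc ⟨h1, h2⟩ => hnoB c hc ⟨h1, le_trans h2 (le_of_lt hyv)⟩) huyneg
  -- sign constancy on each interval of b
  have hsign : ∀ i : Fin k,
      (∀ j ∈ Finset.univ.filter
          (fun j : Fin n => b i.castSucc ≤ (j:ℕ) ∧ (j:ℕ) < b i.succ), 0 ≤ D j) ∨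
      (∀ j ∈ Finset.univ.filter
          (fun j : Fin n => b i.castSucc ≤ (j:ℕ) ∧ (j:ℕ) < b i.succ), D j ≤ 0) := by
    intro i
    by_contra hcon
    push_neg at hcon
    obtain ⟨⟨j1, hj1mem, hj1⟩, ⟨j2, hj2mem, hj2⟩⟩ := hcon
    simp only [Finset.mem_filter, Finset.mem_univ, true_and] at hj1mem hj2mem
    have hD1 : D j1 < 0 := hj1
    have hD2 : 0 < D j2 := hj2
    have hnoB : ∀ u v : ℕ, b i.castSucc ≤ u → v < b i.succ → u < v →
        ∀ c ∈ B, ¬(u < c ∧ c ≤ v) := by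
      rintro u v hu hv huv c hc ⟨h1, h2⟩
      have := hgap i c hc (lt_of_le_of_lt hu h1)
      omega
    have hne : (j1:ℕ) ≠ (j2:ℕ) := by
      intro h
      have : j1 = j2 := Fin.ext h
      rw [this] at hD1
      linarith
    rcases lt_or_gt_of_ne hne with h | h
    · exact hnomix (j2:ℕ) j2.isLt (j1:ℕ) h
        (hnoB _ _ hj1mem.1 hj2mem.2 h)
        (by rw [hgD, hgD]; exact mul_neg_of_neg_of_pos hD1 hD2)
    · exact hnomix (j1:ℕ) j1.isLt (j2:ℕ) h
        (hnoB _ _ hj2mem.1 hj1mem.2 h)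
        (by rw [hgD, hgD]; exact mul_neg_of_pos_of_neg hD2 hD1)
  -- assembly
  have hmass : ∀ a c : ℕ, intervalMass p a c - intervalMass q a c =
      ∑ j ∈ Finset.univ.filter (fun j : Fin n => a ≤ (j:ℕ) ∧ (j:ℕ) < c), D j := by
    intro a c
    rw [intervalMass, intervalMass, ← Finset.sum_sub_distrib]
  have hL1 : L1Dist p q = ∑ j, |D j| := rfl
  rw [AkDist]
  apply IsGreatest.csSup_eq
  constructor
  · refine ⟨b, hbmono, hb0, hblast, ?_⟩
    calc L1Dist p q = ∑ j, |D j| := hL1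
      _ = ∑ i : Fin k, ∑ j ∈ Finset.univ.filter
            (fun j : Fin n => b i.castSucc ≤ (j:ℕ) ∧ (j:ℕ) < b i.succ), |D j| :=
          (AkAux.sum_ivl_partition k b hbmono hb0 hblast (fun j => |D j|)).symm
      _ = ∑ i : Fin k, |∑ j ∈ Finset.univ.filter
            (fun j : Fin n => b i.castSucc ≤ (j:ℕ) ∧ (j:ℕ) < b i.succ), D j| :=
          Finset.sum_congr rfl (fun i _ => (AkAux.abs_sum_eq _ _ (hsign i)).symm)
      _ = ∑ i : Fin k, |intervalMass p (b i.castSucc) (b i.succ)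
            - intervalMass q (b i.castSucc) (b i.succ)| :=
          Finset.sum_congr rfl (fun i _ => by rw [hmass])
  · rintro x ⟨b', hm', h0', hl', rfl⟩
    calc ∑ i : Fin k, |intervalMass p (b' i.castSucc) (b' i.succ)
            - intervalMass q (b' i.castSucc) (b' i.succ)|
        = ∑ i : Fin k, |∑ j ∈ Finset.univ.filter
            (fun j : Fin n => b' i.castSucc ≤ (j:ℕ) ∧ (j:ℕ) < b' i.succ), D j| :=
          Finset.sum_congr rfl (fun i _ => by rw [hmass])
      _ ≤ ∑ i : Fin k, ∑ j ∈ Finset.univ.filter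
            (fun j : Fin n => b' i.castSucc ≤ (j:ℕ) ∧ (j:ℕ) < b' i.succ), |D j| :=
          Finset.sum_le_sum (fun i _ => Finset.abs_sum_le_sum_abs _ _)
      _ = ∑ j, |D j| := AkAux.sum_ivl_partition k b' hm' h0' hl' (fun j => |D j|)
      _ = L1Dist p q := hL1.symm
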